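/- Let K¹ ⊆ E¹ and K² ⊆ E² be closed convex cones, and let F¹ ⊴ K¹ and F² ⊴ K² be faces such that for every bounded set B there exists κ > 0 with d(x, Fⁱ) ≤ κ·g(d(x, Kⁱ)) for all x ∈ (span Fⁱ) ∩ B (i = 1,2), where g: ℝ₊ → ℝ₊ is monotone nondecreasing with g(0) = 0. Then F¹ × F² is a face of K¹ × K² and for every bounded set B ⊆ E¹ × E² there exists κ' > 0 such that d((x₁,x₂), F¹ × F²) ≤ κ'·g(d((x₁,x₂), K¹ × K²)) for all (x₁,x₂) ∈ span(F¹ × F²) ∩ B. -/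

import Mathlib

def IsFaceOf {E : Type*} [NormedAddCommGroup E] [InnerProductSpace ℝ E]
    (F K : Set E) : Prop :=
  F ⊆ K ∧ IsClosed F ∧ Convex ℝ F ∧ (∀ (c : ℝ), 0 ≤ c → ∀ x ∈ F, c • x ∈ F) ∧
    ∀ x y, x ∈ K → y ∈ K → x + y ∈ F → x ∈ F ∧ y ∈ F

section Aux

variable {E₁ E₂ : Type*} [NormedAddCommGroup E₁] [NormedAddCommGroup E₂]

lemma norm_fst_le_L2 (q : WithLp 2 (E₁ × E₂)) : ‖q.fst‖ ≤ ‖q‖ := by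
  rw [WithLp.prod_norm_eq_of_L2]
  refine (Real.le_sqrt (norm_nonneg _) (by positivity)).mpr ?_
  nlinarith [sq_nonneg ‖q.snd‖]

lemma norm_snd_le_L2 (q : WithLp 2 (E₁ × E₂)) : ‖q.snd‖ ≤ ‖q‖ := by
  rw [WithLp.prod_norm_eq_of_L2]
  refine (Real.le_sqrt (norm_nonneg _) (by positivity)).mpr ?_
  nlinarith [sq_nonneg ‖q.fst‖]

lemma dist_fst_le_L2 (q r : WithLp 2 (E₁ × E₂)) : dist q.fst r.fst ≤ dist q r := by
  rw [WithLp.prod_dist_eq_of_L2]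
  refine (Real.le_sqrt dist_nonneg (by positivity)).mpr ?_
  nlinarith [sq_nonneg (dist q.snd r.snd)]

lemma dist_snd_le_L2 (q r : WithLp 2 (E₁ × E₂)) : dist q.snd r.snd ≤ dist q r := by
  rw [WithLp.prod_dist_eq_of_L2]
  refine (Real.le_sqrt dist_nonneg (by positivity)).mpr ?_
  nlinarith [sq_nonneg (dist q.fst r.fst)]

lemma dist_le_sum_L2 (q r : WithLp 2 (E₁ × E₂)) :
    dist q r ≤ dist q.fst r.fst + dist q.snd r.snd := by
  rw [WithLp.prod_dist_eq_of_L2]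
  have h1 : (0:ℝ) ≤ dist q.fst r.fst := dist_nonneg
  have h2 : (0:ℝ) ≤ dist q.snd r.snd := dist_nonneg
  calc √(dist q.fst r.fst ^ 2 + dist q.snd r.snd ^ 2)
      ≤ √((dist q.fst r.fst + dist q.snd r.snd) ^ 2) :=
        Real.sqrt_le_sqrt (by nlinarith)
    _ = dist q.fst r.fst + dist q.snd r.snd := Real.sqrt_sq (by linarith)

end Aux

theorem g_amenable_product
    {E₁ E₂ : Type*} [NormedAddCommGroup E₁] [InnerProductSpace ℝ E₁] [FiniteDimensional ℝ E₁]
    [NormedAddCommGroup E₂] [InnerProductSpace ℝ E₂] [FiniteDimensional ℝ E₂]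
    (K₁ F₁ : Set E₁) (K₂ F₂ : Set E₂)
    (hK₁cl : IsClosed K₁) (hK₁cv : Convex ℝ K₁)
    (hK₁cone : ∀ (c : ℝ), 0 ≤ c → ∀ x ∈ K₁, c • x ∈ K₁)
    (hK₂cl : IsClosed K₂) (hK₂cv : Convex ℝ K₂)
    (hK₂cone : ∀ (c : ℝ), 0 ≤ c → ∀ x ∈ K₂, c • x ∈ K₂)
    (hF₁ : IsFaceOf F₁ K₁) (hF₂ : IsFaceOf F₂ K₂)
    (g : ℝ → ℝ) (hg0 : g 0 = 0) (hgmono : MonotoneOn g (Set.Ici 0))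
    (hgnn : ∀ t : ℝ, 0 ≤ t → 0 ≤ g t)
    (ham₁ : ∀ B : Set E₁, Bornology.IsBounded B → ∃ κ : ℝ, 0 < κ ∧
      ∀ x ∈ (Submodule.span ℝ F₁ : Set E₁) ∩ B,
        Metric.infDist x F₁ ≤ κ * g (Metric.infDist x K₁))
    (ham₂ : ∀ B : Set E₂, Bornology.IsBounded B → ∃ κ : ℝ, 0 < κ ∧
      ∀ x ∈ (Submodule.span ℝ F₂ : Set E₂) ∩ B,
        Metric.infDist x F₂ ≤ κ * g (Metric.infDist x K₂)) :
    IsFaceOf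
      {q : WithLp 2 (E₁ × E₂) |
        ((WithLp.equiv 2 (E₁ × E₂)) q).1 ∈ F₁ ∧ ((WithLp.equiv 2 (E₁ × E₂)) q).2 ∈ F₂}
      {q : WithLp 2 (E₁ × E₂) |
        ((WithLp.equiv 2 (E₁ × E₂)) q).1 ∈ K₁ ∧ ((WithLp.equiv 2 (E₁ × E₂)) q).2 ∈ K₂} ∧
    ∀ B : Set (WithLp 2 (E₁ × E₂)), Bornology.IsBounded B → ∃ κ' : ℝ, 0 < κ' ∧
      ∀ q ∈ (Submodule.span ℝ
          {q : WithLp 2 (E₁ × E₂) |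
            ((WithLp.equiv 2 (E₁ × E₂)) q).1 ∈ F₁ ∧
              ((WithLp.equiv 2 (E₁ × E₂)) q).2 ∈ F₂} : Set (WithLp 2 (E₁ × E₂))) ∩ B,
        Metric.infDist q
            {q : WithLp 2 (E₁ × E₂) |
              ((WithLp.equiv 2 (E₁ × E₂)) q).1 ∈ F₁ ∧
                ((WithLp.equiv 2 (E₁ × E₂)) q).2 ∈ F₂} ≤
          κ' * g (Metric.infDist q
            {q : WithLp 2 (E₁ × E₂) |
              ((WithLp.equiv 2 (E₁ × E₂)) q).1 ∈ K₁ ∧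
                ((WithLp.equiv 2 (E₁ × E₂)) q).2 ∈ K₂}) := by
  simp only [show ∀ q : WithLp 2 (E₁ × E₂), (WithLp.equiv 2 (E₁ × E₂) q).1 = q.fst from fun _ => rfl,
    show ∀ q : WithLp 2 (E₁ × E₂), (WithLp.equiv 2 (E₁ × E₂) q).2 = q.snd from fun _ => rfl]
  set Fp : Set (WithLp 2 (E₁ × E₂)) := {q | q.fst ∈ F₁ ∧ q.snd ∈ F₂} with hFpdef
  set Kp : Set (WithLp 2 (E₁ × E₂)) := {q | q.fst ∈ K₁ ∧ q.snd ∈ K₂} with hKpdef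
  have contF : Continuous (fun q : WithLp 2 (E₁ × E₂) => q.fst) :=
    continuous_fst.comp (WithLp.prod_continuous_ofLp 2 E₁ E₂)
  have contS : Continuous (fun q : WithLp 2 (E₁ × E₂) => q.snd) :=
    continuous_snd.comp (WithLp.prod_continuous_ofLp 2 E₁ E₂)
  constructor
  · refine ⟨fun q hq => ⟨hF₁.1 hq.1, hF₂.1 hq.2⟩, ?_, ?_, ?_, ?_⟩
    · exact (hF₁.2.1.preimage contF).inter (hF₂.2.1.preimage contS)
    · intro x hx y hy a b ha hb hab
      exact ⟨hF₁.2.2.1 hx.1 hy.1 ha hb hab, hF₂.2.2.1 hx.2 hy.2 ha hb hab⟩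
    · intro c hc x hx
      exact ⟨hF₁.2.2.2.1 c hc _ hx.1, hF₂.2.2.2.1 c hc _ hx.2⟩
    · intro x y hx hy hxy
      obtain ⟨h1x, h1y⟩ := hF₁.2.2.2.2 x.fst y.fst hx.1 hy.1 hxy.1
      obtain ⟨h2x, h2y⟩ := hF₂.2.2.2.2 x.snd y.snd hx.2 hy.2 hxy.2
      exact ⟨⟨h1x, h2x⟩, ⟨h1y, h2y⟩⟩
  · intro B hB
    rcases Set.eq_empty_or_nonempty Fp with hFpe | hFpne
    · refine ⟨1, one_pos, fun q hq => ?_⟩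
      rw [hFpe, Metric.infDist_empty]
      have := hgnn _ (Metric.infDist_nonneg (s := Kp) (x := q))
      linarith
    · have hF₁ne : F₁.Nonempty := ⟨hFpne.choose.fst, hFpne.choose_spec.1⟩
      have hF₂ne : F₂.Nonempty := ⟨hFpne.choose.snd, hFpne.choose_spec.2⟩
      have hKpne : Kp.Nonempty := ⟨hFpne.choose, hF₁.1 hFpne.choose_spec.1, hF₂.1 hFpne.choose_spec.2⟩
      obtain ⟨r, hr⟩ := hB.subset_closedBall 0
      obtain ⟨κ₁, hκ₁, h1⟩ := ham₁ (Metric.closedBall 0 r) Metric.isBounded_closedBall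
      obtain ⟨κ₂, hκ₂, h2⟩ := ham₂ (Metric.closedBall 0 r) Metric.isBounded_closedBall
      refine ⟨κ₁ + κ₂, by linarith, fun q hq => ?_⟩
      -- components lie in the spans
      have hsp : q.fst ∈ Submodule.span ℝ F₁ ∧ q.snd ∈ Submodule.span ℝ F₂ := by
        refine Submodule.span_induction
          (p := fun x _ => x.fst ∈ Submodule.span ℝ F₁ ∧ x.snd ∈ Submodule.span ℝ F₂)
          (fun x hx => ⟨Submodule.subset_span hx.1, Submodule.subset_span hx.2⟩)
          ⟨by simp, by simp⟩
          (fun x y _ _ hx hy => ⟨by simpa using add_mem hx.1 hy.1, by simpa using add_mem hx.2 hy.2⟩)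
          (fun c x _ hx => ⟨by simpa using Submodule.smul_mem _ c hx.1,
            by simpa using Submodule.smul_mem _ c hx.2⟩) hq.1
      -- components lie in the ball
      have hqn : ‖q‖ ≤ r := by simpa using mem_closedBall_zero_iff.mp (hr hq.2)
      have hb1 : q.fst ∈ Metric.closedBall (0 : E₁) r :=
        mem_closedBall_zero_iff.mpr ((norm_fst_le_L2 q).trans hqn)
      have hb2 : q.snd ∈ Metric.closedBall (0 : E₂) r :=
        mem_closedBall_zero_iff.mpr ((norm_snd_le_L2 q).trans hqn)
      -- component distances to K are bounded by the product distance
      have hKpcl : IsClosed Kp := (hK₁cl.preimage contF).inter (hK₂cl.preimage contS)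
      obtain ⟨z, hz, hdz⟩ := hKpcl.exists_infDist_eq_dist hKpne q
      have hdK1 : Metric.infDist q.fst K₁ ≤ Metric.infDist q Kp := by
        rw [hdz]
        exact (Metric.infDist_le_dist_of_mem hz.1).trans (dist_fst_le_L2 q z)
      have hdK2 : Metric.infDist q.snd K₂ ≤ Metric.infDist q Kp := by
        rw [hdz]
        exact (Metric.infDist_le_dist_of_mem hz.2).trans (dist_snd_le_L2 q z)
      -- product distance to F is bounded by sum of component distances
      obtain ⟨y₁, hy₁, hdy₁⟩ := hF₁.2.1.exists_infDist_eq_dist hF₁ne q.fst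
      obtain ⟨y₂, hy₂, hdy₂⟩ := hF₂.2.1.exists_infDist_eq_dist hF₂ne q.snd
      set y : WithLp 2 (E₁ × E₂) := (WithLp.equiv 2 (E₁ × E₂)).symm (y₁, y₂) with hydef
      have hyF : y ∈ Fp := ⟨hy₁, hy₂⟩
      have hdF : Metric.infDist q Fp ≤ Metric.infDist q.fst F₁ + Metric.infDist q.snd F₂ := by
        calc Metric.infDist q Fp ≤ dist q y := Metric.infDist_le_dist_of_mem hyF
          _ ≤ dist q.fst y.fst + dist q.snd y.snd := dist_le_sum_L2 q y
          _ = Metric.infDist q.fst F₁ + Metric.infDist q.snd F₂ := by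
              rw [hdy₁, hdy₂]; rfl
      have e1 : Metric.infDist q.fst F₁ ≤ κ₁ * g (Metric.infDist q.fst K₁) :=
        h1 q.fst ⟨hsp.1, hb1⟩
      have e2 : Metric.infDist q.snd F₂ ≤ κ₂ * g (Metric.infDist q.snd K₂) :=
        h2 q.snd ⟨hsp.2, hb2⟩
      have m1 : g (Metric.infDist q.fst K₁) ≤ g (Metric.infDist q Kp) :=
        hgmono Metric.infDist_nonneg Metric.infDist_nonneg hdK1
      have m2 : g (Metric.infDist q.snd K₂) ≤ g (Metric.infDist q Kp) :=
        hgmono Metric.infDist_nonneg Metric.infDist_nonneg hdK2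
      have := hgnn _ (Metric.infDist_nonneg (s := Kp) (x := q))
      nlinarith
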